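/- Let L ⊣ R be an adjunction between tensor categories with L a (strong) symmetric monoidal functor, and equip R with the induced lax monoidal structure. Let A = R(𝟙) with its induced commutative monoid structure. Then the natural map π : A ⊗ X → RL(X), defined as the projection map at (𝟙, X), is a morphism of monads on the source category, from the monad A ⊗ (−) to the monad RL. -/

import Mathlib

/-!
Statement 8: Let `L ⊣ R` be an adjunction between tensor (symmetric monoidal) categories
with `L` a (strong) symmetric monoidal functor, and equip `R` with the induced lax monoidal
structure `λ_{Y,Y'} : R Y ⊗ R Y' ⟶ R (Y ⊗ Y')`, `ι : 𝟙 ⟶ R 𝟙`.  Let `A = R(𝟙)` with its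
induced (commutative) monoid structure.  Then the natural map `π : A ⊗ X ⟶ RL X` — the
projection map `π_{𝟙,X} = λ_{𝟙,LX} ∘ (id ⊗ η)` at `(𝟙, X)` — is a morphism of monads on
the source category, from the monad `A ⊗ (−)` to the monad `RL`; i.e. `π` is compatible
with the units and the multiplications of the two monads.
-/

open CategoryTheory MonoidalCategory

universe v₁ v₂ u₁ u₂

namespace ProjectionMonadHom

variable {C : Type u₁} {D : Type u₂} [Category.{v₁} C] [Category.{v₂} D]
variable [MonoidalCategory C] [MonoidalCategory D]
variable [SymmetricCategory C] [SymmetricCategory D]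
variable (L : C ⥤ D) (R : D ⥤ C) [L.Monoidal] (adj : L ⊣ R)

/-- The lax monoidal structure map of the right adjoint `R` induced by the monoidal
structure of `L`: `λ_{Y,Y'} : R Y ⊗ R Y' ⟶ R (Y ⊗ Y')`. -/
def lax (Y Y' : D) : R.obj Y ⊗ R.obj Y' ⟶ R.obj (Y ⊗ Y') :=
  adj.unit.app (R.obj Y ⊗ R.obj Y') ≫
    R.map (Functor.OplaxMonoidal.δ L (R.obj Y) (R.obj Y') ≫
      (adj.counit.app Y ⊗ₘ adj.counit.app Y'))

/-- The lax monoidal unit of `R`: `ι : 𝟙_C ⟶ R (𝟙_D)`. -/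
def iota : 𝟙_ C ⟶ R.obj (𝟙_ D) :=
  adj.unit.app (𝟙_ C) ≫ R.map (Functor.OplaxMonoidal.η L)

/-- The induced multiplication on the commutative monoid `A = R (𝟙_D)`. -/
def mult : R.obj (𝟙_ D) ⊗ R.obj (𝟙_ D) ⟶ R.obj (𝟙_ D) :=
  lax L R adj (𝟙_ D) (𝟙_ D) ≫ R.map (λ_ (𝟙_ D)).hom

/-- The projection map `π = π_{𝟙,X} : A ⊗ X ⟶ R (𝟙 ⊗ L X) ≅ RL X`. -/
def pi (X : C) : R.obj (𝟙_ D) ⊗ X ⟶ R.obj (L.obj X) :=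
  (R.obj (𝟙_ D) ◁ adj.unit.app X) ≫ lax L R adj (𝟙_ D) (L.obj X) ≫
    R.map (λ_ (L.obj X)).hom


section
variable [R.LaxMonoidal] [adj.IsMonoidal]

lemma lax_eq_μ (Y Y' : D) : lax L R adj Y Y' = Functor.LaxMonoidal.μ R Y Y' := by
  rw [Adjunction.IsMonoidal.leftAdjoint_μ (adj := adj)]
  rfl

lemma iota_eq_ε : iota L R adj = Functor.LaxMonoidal.ε R := by
  rw [Adjunction.IsMonoidal.leftAdjoint_ε (adj := adj)]
  rfl

theorem unit_comm (X : C) :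
    (λ_ X).inv ≫ (iota L R adj ▷ X) ≫ pi L R adj X = adj.unit.app X := by
  rw [iota_eq_ε, pi, lax_eq_μ]
  calc (λ_ X).inv ≫ Functor.LaxMonoidal.ε R ▷ X ≫
        (R.obj (𝟙_ D) ◁ adj.unit.app X) ≫ Functor.LaxMonoidal.μ R (𝟙_ D) (L.obj X) ≫
        R.map (λ_ (L.obj X)).hom
      = (λ_ X).inv ≫ (𝟙_ C ◁ adj.unit.app X) ≫
          (Functor.LaxMonoidal.ε R ▷ R.obj (L.obj X)) ≫
          Functor.LaxMonoidal.μ R (𝟙_ D) (L.obj X) ≫ R.map (λ_ (L.obj X)).hom := by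
        rw [← whisker_exchange_assoc]; rfl
    _ = adj.unit.app X ≫ (λ_ (R.obj (L.obj X))).inv ≫ (λ_ (R.obj (L.obj X))).hom := by
        rw [← Functor.LaxMonoidal.left_unitality]
        rw [← leftUnitor_inv_naturality_assoc]; rfl
    _ = adj.unit.app X := by rw [Iso.inv_hom_id, Category.comp_id]

theorem mul_comm' (X : C) :
    (α_ (R.obj (𝟙_ D)) (R.obj (𝟙_ D)) X).inv ≫ (mult L R adj ▷ X) ≫ pi L R adj X =
      (R.obj (𝟙_ D) ◁ pi L R adj X) ≫ pi L R adj (R.obj (L.obj X)) ≫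
        R.map (adj.counit.app (L.obj X)) := by
  simp only [pi, mult, lax_eq_μ]
  -- simplify the RHS first
  have rhs :
      ((R.obj (𝟙_ D) ◁ adj.unit.app (R.obj (L.obj X))) ≫
          Functor.LaxMonoidal.μ R (𝟙_ D) (L.obj (R.obj (L.obj X))) ≫
          R.map (λ_ (L.obj (R.obj (L.obj X)))).hom) ≫
        R.map (adj.counit.app (L.obj X)) =
      Functor.LaxMonoidal.μ R (𝟙_ D) (L.obj X) ≫ R.map (λ_ (L.obj X)).hom := by
    simp only [Category.assoc]
    rw [← R.map_comp, ← leftUnitor_naturality, R.map_comp,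
      ← Functor.LaxMonoidal.μ_natural_right_assoc,
      ← MonoidalCategory.whiskerLeft_comp_assoc, adj.right_triangle_components]
    simp
  rw [rhs]
  simp only [MonoidalCategory.whiskerLeft_comp, Category.assoc, comp_whiskerRight]
  rw [← whisker_exchange_assoc, ← whisker_exchange_assoc]
  simp only [Functor.comp_obj]
  rw [Functor.LaxMonoidal.μ_natural_left_assoc,
    ← associator_inv_naturality_right_assoc]
  have coh : (λ_ (𝟙_ D)).hom ▷ L.obj X ≫ (λ_ (L.obj X)).hom =
      (α_ (𝟙_ D) (𝟙_ D) (L.obj X)).hom ≫ (𝟙_ D ◁ (λ_ (L.obj X)).hom) ≫ (λ_ (L.obj X)).hom := by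
    monoidal_coherence
  rw [← R.map_comp, coh, R.map_comp, R.map_comp,
    Functor.LaxMonoidal.associativity_assoc,
    ← Functor.LaxMonoidal.μ_natural_right_assoc]
  simp

end

/-- **The projection map is a morphism of monads** from `A ⊗ (−)` to `RL`:
it commutes with the units and with the multiplications of the two monads. -/
theorem pi_monadHom :
    -- compatibility with the units: `η^{A⊗(−)} ≫ π = η^{RL}`
    (∀ X : C,
      (λ_ X).inv ≫ (iota L R adj ▷ X) ≫ pi L R adj X = adj.unit.app X) ∧
    -- compatibility with the multiplications:
    -- `μ^{A⊗(−)} ≫ π = (A ◁ π) ≫ π_{RL X} ≫ μ^{RL}`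
    (∀ X : C,
      (α_ (R.obj (𝟙_ D)) (R.obj (𝟙_ D)) X).inv ≫ (mult L R adj ▷ X) ≫ pi L R adj X =
        (R.obj (𝟙_ D) ◁ pi L R adj X) ≫ pi L R adj (R.obj (L.obj X)) ≫
          R.map (adj.counit.app (L.obj X))) := by

  letI : R.LaxMonoidal := adj.rightAdjointLaxMonoidal
  exact ⟨unit_comm L R adj, mul_comm' L R adj⟩

end ProjectionMonadHom
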